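/- Let B be a finite group and Y ⊆ B with Y = Y⁻¹ and 1 ∉ Y. For i = 1, 2 let A_i be a finite group, X_i ⊆ A_i with X_i = X_i⁻¹, 1 ∉ X_i, and X_i generating A_i, and let f_i : A_i → B be a surjective group homomorphism such that f_i(X_i) = Y, X_i ∩ ker f_i = ∅, and the restriction of f_i to X_i is injective. Then there exists a graph isomorphism Φ : Cay(A_1, X_1) ≅ Cay(A_2, X_2) with f_2 ∘ Φ = f_1 (as maps on vertices) if and only if there exists a group isomorphism φ : A_1 ≅ A_2 with f_2 ∘ φ = f_1 and φ(X_1) = X_2. -/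

import Mathlib

/-- The Cayley graph of a group `A` relative to a subset `X` (assumed symmetric and
not containing `1`): vertices are elements of `A`, and `g`, `h` are adjacent iff
`g⁻¹ * h ∈ X`. -/
def cayleyGraph {A : Type*} [Group A] (X : Set A) : SimpleGraph A :=
  SimpleGraph.fromRel (fun g h => g⁻¹ * h ∈ X)

theorem stmt0 {B A₁ A₂ : Type*} [Group B] [Group A₁] [Group A₂]
    [Finite B] [Finite A₁] [Finite A₂]
    (Y : Set B) (hY : Y⁻¹ = Y) (hY1 : (1 : B) ∉ Y)
    (X₁ : Set A₁) (hX₁ : X₁⁻¹ = X₁) (hX₁1 : (1 : A₁) ∉ X₁)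
    (hX₁gen : Subgroup.closure X₁ = ⊤)
    (X₂ : Set A₂) (hX₂ : X₂⁻¹ = X₂) (hX₂1 : (1 : A₂) ∉ X₂)
    (hX₂gen : Subgroup.closure X₂ = ⊤)
    (f₁ : A₁ →* B) (hf₁ : Function.Surjective f₁) (hf₁X : f₁ '' X₁ = Y)
    (hf₁ker : X₁ ∩ (f₁.ker : Set A₁) = ∅) (hf₁inj : Set.InjOn f₁ X₁)
    (f₂ : A₂ →* B) (hf₂ : Function.Surjective f₂) (hf₂X : f₂ '' X₂ = Y)
    (hf₂ker : X₂ ∩ (f₂.ker : Set A₂) = ∅) (hf₂inj : Set.InjOn f₂ X₂) :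
    (∃ Φ : cayleyGraph X₁ ≃g cayleyGraph X₂, ∀ a, f₂ (Φ a) = f₁ a) ↔
    (∃ φ : A₁ ≃* A₂, (∀ a, f₂ (φ a) = f₁ a) ∧ φ '' X₁ = X₂) := by
  constructor
  · rintro ⟨Φ, hΦ⟩
    set ψ : A₁ ≃ A₂ := Φ.toEquiv.trans (Equiv.mulLeft (Φ 1)⁻¹) with hψdef
    have hψ : ∀ a, ψ a = (Φ 1)⁻¹ * Φ a := fun a => rfl
    have hψ1 : ψ 1 = 1 := by simp [hψ]
    have hfψ : ∀ a, f₂ (ψ a) = f₁ a := by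
      intro a
      simp [hψ, map_mul, map_inv, hΦ]
    -- membership of "increments" in X₂
    have hmem : ∀ a x, x ∈ X₁ → (ψ a)⁻¹ * ψ (a * x) ∈ X₂ := by
      intro a x hx
      have hne : a ≠ a * x := by
        intro h
        apply hX₁1
        have h' : a * 1 = a * x := by rwa [mul_one]
        have : (1 : A₁) = x := mul_left_cancel h'
        rwa [← this] at hx
      have hadj : (cayleyGraph X₁).Adj a (a * x) := by
        refine ⟨hne, Or.inl ?_⟩
        simpa using hx
      have hadj2 : (cayleyGraph X₂).Adj (Φ a) (Φ (a * x)) := Φ.map_rel_iff.mpr hadj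
      have heq : (ψ a)⁻¹ * ψ (a * x) = (Φ a)⁻¹ * Φ (a * x) := by
        rw [hψ, hψ]; group
      rw [heq]
      rcases hadj2.2 with h | h
      · exact h
      · have h' : ((Φ (a * x))⁻¹ * Φ a)⁻¹ ∈ X₂⁻¹ := Set.inv_mem_inv.mpr h
        rw [hX₂] at h'
        simpa using h'
    -- key step: increments only depend on x
    have key : ∀ a x, x ∈ X₁ → ψ (a * x) = ψ a * ψ x := by
      intro a x hx
      have h1 := hmem a x hx
      have h2 : ψ x ∈ X₂ := by
        have := hmem 1 x hx
        simpa [hψ1] using this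
      have hf : f₂ ((ψ a)⁻¹ * ψ (a * x)) = f₂ (ψ x) := by
        rw [map_mul, map_inv, hfψ, hfψ, hfψ, map_mul]
        group
      have := hf₂inj h1 h2 hf
      rw [← this]
      group
    have hmul : ∀ b a, ψ (a * b) = ψ a * ψ b := by
      intro b
      have hb : b ∈ Subgroup.closure X₁ := by rw [hX₁gen]; trivial
      induction hb using Subgroup.closure_induction with
      | mem x hx => exact fun a => key a x hx
      | one => intro a; simp [hψ1]
      | mul c d _ _ ihc ihd =>
          intro a
          have h1 : ψ (a * (c * d)) = ψ (a * c) * ψ d := by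
            rw [← mul_assoc]; exact ihd (a * c)
          have h2 : ψ (c * d) = ψ c * ψ d := ihd c
          rw [h1, ihc a, h2, mul_assoc]
      | inv c _ ihc =>
          intro a
          have hinv : ψ c⁻¹ = (ψ c)⁻¹ := by
            have := ihc c⁻¹
            rw [inv_mul_cancel, hψ1] at this
            exact (eq_inv_of_mul_eq_one_left this.symm)
          have : ψ a = ψ (a * c⁻¹) * ψ c := by
            have := ihc (a * c⁻¹)
            rw [mul_assoc, inv_mul_cancel, mul_one] at this
            exact this
          rw [hinv, eq_mul_inv_iff_mul_eq]
          exact this.symm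
    refine ⟨MulEquiv.mk' ψ (fun a b => hmul b a), hfψ, ?_⟩
    apply Set.eq_of_subset_of_subset
    · rintro _ ⟨x, hx, rfl⟩
      have := hmem 1 x hx
      exact (by simpa [hψ1] using this : ψ x ∈ X₂)
    · intro y hy
      have hfy : f₂ y ∈ Y := by rw [← hf₂X]; exact ⟨y, hy, rfl⟩
      rw [← hf₁X] at hfy
      obtain ⟨x, hx, hfx⟩ := hfy
      have hψx : ψ x ∈ X₂ := by
        have := hmem 1 x hx
        simpa [hψ1] using this
      have : ψ x = y := hf₂inj hψx hy (by rw [hfψ, hfx])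
      exact ⟨x, hx, this⟩
  · rintro ⟨φ, hφf, hφX⟩
    have hφmem : ∀ z, φ z ∈ X₂ ↔ z ∈ X₁ := by
      intro z
      rw [← hφX]
      constructor
      · rintro ⟨w, hw, he⟩
        rwa [← φ.injective he]
      · exact fun h => ⟨z, h, rfl⟩
    refine ⟨⟨φ.toEquiv, ?_⟩, fun a => hφf a⟩
    intro a b
    show (cayleyGraph X₂).Adj (φ a) (φ b) ↔ (cayleyGraph X₁).Adj a b
    unfold cayleyGraph
    rw [SimpleGraph.fromRel_adj, SimpleGraph.fromRel_adj]
    have h1 : (φ a)⁻¹ * φ b = φ (a⁻¹ * b) := by rw [map_mul, map_inv]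
    have h2 : (φ b)⁻¹ * φ a = φ (b⁻¹ * a) := by rw [map_mul, map_inv]
    rw [h1, h2, hφmem, hφmem, φ.injective.ne_iff]
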